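/- arXiv:1708.05834 — 4 statements merged into one kernel-verified Lean document; each statement's English description precedes it below -/
import Mathlib

section
/- For all real numbers u > 0 and α > 0, ∫_0^{u^α} √( ln( 2 u ε^{−1/α} + 1 ) ) dε ≤ C(α) u^α. -/
open MeasureTheory ProbabilityTheory Real Filter Finset Set Topology

/-- Orlicz norm associated with the Young function φ(x) = exp(x²) − 1. -/
noncomputable def orliczNorm {Ω : Type*} [MeasurableSpace Ω] (P : Measure Ω) (X : Ω → ℝ) : ℝ :=
  sInf {c : ℝ | 0 < c ∧ ∫ ω, (Real.exp ((|X ω| / c) ^ 2) - 1) ∂P ≤ 1}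

/-- Membership in the Orlicz space L^φ(Ω): E[φ(a|X|)] < ∞ for some a > 0. -/
def MemLphi {Ω : Type*} [MeasurableSpace Ω] (P : Measure Ω) (X : Ω → ℝ) : Prop :=
  ∃ a : ℝ, 0 < a ∧ Integrable (fun ω => Real.exp ((a * |X ω|) ^ 2) - 1) P

/-- The constant C(α) = (2^{2α+2}/√α) ∫_{√(α ln 3)}^∞ x² e^{−x²} dx. -/
noncomputable def Cconst (α : ℝ) : ℝ :=
  (2 : ℝ) ^ (2 * α + 2) / Real.sqrt α *
    ∫ x in Set.Ioi (Real.sqrt (α * Real.log 3)), x ^ 2 * Real.exp (-x ^ 2)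

/-- `X` is subgaussian with admissible constant `c`:
E[exp(tX)] ≤ exp(c²t²/2) for all t (stated with the lower integral,
which in particular encodes finiteness of the exponential moments). -/
def IsSubgaussianWith {Ω : Type*} [MeasurableSpace Ω] (P : Measure Ω) (X : Ω → ℝ) (c : ℝ) : Prop :=
  0 ≤ c ∧ ∀ t : ℝ, ∫⁻ ω, ENNReal.ofReal (Real.exp (t * X ω)) ∂P
    ≤ ENNReal.ofReal (Real.exp (c ^ 2 * t ^ 2 / 2))

/-- `X` is subgaussian. -/
def Subgaussian {Ω : Type*} [MeasurableSpace Ω] (P : Measure Ω) (X : Ω → ℝ) : Prop :=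
  ∃ c : ℝ, IsSubgaussianWith P X c

/-- The subgaussian standard τ(X). -/
noncomputable def subgStd {Ω : Type*} [MeasurableSpace Ω] (P : Measure Ω) (X : Ω → ℝ) : ℝ :=
  sInf {c : ℝ | IsSubgaussianWith P X c}

/-- Negative dependence of a sequence of random variables. -/
def NegDep {Ω : Type*} [MeasurableSpace Ω] (P : Measure Ω) (X : ℕ → Ω → ℝ) : Prop :=
  ∀ (s : Finset ℕ) (x : ℕ → ℝ),
    P {ω | ∀ k ∈ s, X k ω ≤ x k} ≤ ∏ k ∈ s, P {ω | X k ω ≤ x k} ∧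
    P {ω | ∀ k ∈ s, x k < X k ω} ≤ ∏ k ∈ s, P {ω | x k < X k ω}

/-- A (𝓑, c²)-conditionally subgaussian sequence (relevant indices k ≥ 1):
a martingale difference sequence w.r.t. the filtration `B` (with `B 0` trivial)
whose conditional moment generating functions satisfy the subgaussian bound. -/
def CondSubgaussianSeq {Ω : Type*} {mΩ : MeasurableSpace Ω} (P : Measure Ω)
    (B : ℕ → MeasurableSpace Ω) (c : ℕ → ℝ) (X : ℕ → Ω → ℝ) : Prop :=
  Monotone B ∧ (∀ k, B k ≤ mΩ) ∧ B 0 = ⊥ ∧ (∀ k, 1 ≤ k → 0 < c k) ∧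
  (∀ k, 1 ≤ k → StronglyMeasurable[B k] (X k)) ∧
  (∀ k, 1 ≤ k → Integrable (X k) P) ∧
  (∀ k, 1 ≤ k → P[X k | B (k - 1)] =ᵐ[P] 0) ∧
  (∀ k, 1 ≤ k → ∀ t : ℝ, Integrable (fun ω => Real.exp (t * X k ω)) P ∧
    P[(fun ω => Real.exp (t * X k ω)) | B (k - 1)] ≤ᵐ[P] fun _ => Real.exp (c k ^ 2 * t ^ 2 / 2))

/-- A sequence whose partial sums have d_{ũ,α}-subgaussian increments. -/
def SubgaussianIncrements {Ω : Type*} [MeasurableSpace Ω] (P : Measure Ω)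
    (u : ℕ → ℝ) (α : ℝ) (Y : ℕ → Ω → ℝ) : Prop :=
  ∀ n m : ℕ, n < m → ∀ l : ℝ,
    ∫⁻ ω, ENNReal.ofReal (Real.exp (l * ∑ k ∈ Finset.Icc (n + 1) m, Y k ω)) ∂P
      ≤ ENNReal.ofReal
          (Real.exp (((∑ k ∈ Finset.Icc (n + 1) m, u k) ^ α) ^ 2 * l ^ 2 / 2))

lemma key (α : ℝ) (hα : 0 < α) :
    ∫ t in Set.Ioo (0:ℝ) 1, Real.sqrt (Real.log (2 * t ^ (-(1/α)) + 1)) ≤ Cconst α := by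
  have h3 : (0:ℝ) < Real.log 3 := Real.log_pos (by norm_num)
  set b := Real.sqrt (α * Real.log 3) with hb_def
  have hb0 : 0 < b := Real.sqrt_pos.2 (by positivity)
  have hb2 : b ^ 2 = α * Real.log 3 := Real.sq_sqrt (by positivity)
  set φ : ℝ → ℝ := fun y => (3:ℝ) ^ α * Real.exp (-y ^ 2) with hφ
  set φ' : ℝ → ℝ := fun y => (3:ℝ) ^ α * (Real.exp (-y ^ 2) * (-(2 * y))) with hφ'
  have h3α : (0:ℝ) < (3:ℝ) ^ α := Real.rpow_pos_of_pos (by norm_num) α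
  set h : ℝ → ℝ := fun t => Real.sqrt (Real.log 3 - (1/α) * Real.log t) with hh
  have hderiv : ∀ y ∈ Set.Ioi b, HasDerivWithinAt φ (φ' y) (Set.Ioi b) y := by
    intro y _
    have h1 : HasDerivAt (fun y : ℝ => -y ^ 2) (-(2 * y)) y := by
      have := (hasDerivAt_pow 2 y).neg
      simp at this
      exact this
    have h2 := (Real.hasDerivAt_exp (-y ^ 2)).comp y h1
    exact (h2.const_mul ((3:ℝ) ^ α)).hasDerivWithinAt
  have hinj : InjOn φ (Set.Ioi b) := by
    have hanti : StrictAntiOn φ (Set.Ioi b) := by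
      intro x hx y hy hxy
      have hx0 : 0 < x := lt_trans hb0 hx
      have : -y ^ 2 < -x ^ 2 := by nlinarith
      exact mul_lt_mul_of_pos_left (Real.exp_lt_exp.2 this) h3α
    exact hanti.injOn
  have hφexp : ∀ y : ℝ, φ y = Real.exp (Real.log 3 * α - y ^ 2) := by
    intro y
    show (3:ℝ) ^ α * Real.exp (-y ^ 2) = _
    rw [Real.rpow_def_of_pos (by norm_num : (0:ℝ) < 3), ← Real.exp_add]
    ring_nf
  have himg : φ '' Set.Ioi b = Set.Ioo 0 1 := by
    ext t
    constructor
    · rintro ⟨y, hy, rfl⟩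
      have hy0 : 0 < y := lt_trans hb0 hy
      refine ⟨by positivity, ?_⟩
      rw [hφexp]
      have hby : b < y := hy
      have : Real.log 3 * α - y ^ 2 < 0 := by nlinarith [hb2, hby, hb0]
      calc Real.exp (Real.log 3 * α - y ^ 2) < Real.exp 0 := Real.exp_lt_exp.2 this
        _ = 1 := Real.exp_zero
    · rintro ⟨ht0, ht1⟩
      have hlt : Real.log t < 0 := Real.log_neg ht0 ht1
      refine ⟨Real.sqrt (α * Real.log 3 - Real.log t), ?_, ?_⟩
      · rw [hb_def, Set.mem_Ioi]
        exact Real.sqrt_lt_sqrt (by positivity) (by linarith)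
      · rw [hφexp, Real.sq_sqrt (by nlinarith)]
        rw [show Real.log 3 * α - (α * Real.log 3 - Real.log t) = Real.log t by ring]
        exact Real.exp_log ht0
  have hchg := MeasureTheory.integral_image_eq_integral_abs_deriv_smul
      measurableSet_Ioi hderiv hinj h
  rw [himg] at hchg
  have hpt : EqOn (fun y => |φ' y| • h (φ y))
      (fun y => (2 * (3:ℝ) ^ α / Real.sqrt α) * (y ^ 2 * Real.exp (-y ^ 2))) (Set.Ioi b) := by
    intro y hy
    have hy0 : 0 < y := lt_trans hb0 hy
    have habs : |φ' y| = (3:ℝ) ^ α * (2 * y) * Real.exp (-y ^ 2) := by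
      show |(3:ℝ) ^ α * (Real.exp (-y ^ 2) * (-(2 * y)))| = _
      rw [show (3:ℝ) ^ α * (Real.exp (-y ^ 2) * (-(2 * y)))
          = -((3:ℝ) ^ α * (2 * y) * Real.exp (-y ^ 2)) by ring, abs_neg, abs_of_nonneg]
      positivity
    have hlog : Real.log (φ y) = Real.log 3 * α - y ^ 2 := by
      rw [hφexp, Real.log_exp]
    have harg : Real.log 3 - (1/α) * Real.log (φ y) = y ^ 2 / α := by
      rw [hlog]; field_simp; ring
    have hsq : Real.sqrt (y ^ 2 / α) = y / Real.sqrt α := by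
      rw [Real.sqrt_div (sq_nonneg y), Real.sqrt_sq hy0.le]
    simp only [smul_eq_mul, hh]
    rw [habs, harg, hsq]
    have hsα : (0:ℝ) < Real.sqrt α := Real.sqrt_pos.2 hα
    field_simp
  rw [MeasureTheory.setIntegral_congr_fun measurableSet_Ioi hpt,
    MeasureTheory.integral_const_mul] at hchg
  -- integrability of y^2 exp(-y^2) on Set.Ioi b
  have hGint : IntegrableOn (fun y : ℝ => y ^ 2 * Real.exp (-y ^ 2)) (Set.Ioi b) := by
    have A := integrableOn_rpow_mul_exp_neg_mul_sq (b := 1) one_pos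
      (s := 2) (by norm_num)
    have B := A.mono_set (Ioi_subset_Ioi hb0.le)
    refine B.congr_fun ?_ measurableSet_Ioi
    intro y hy
    simp only [Real.rpow_two]
    norm_num
  have hG0 : 0 ≤ ∫ y in Set.Ioi b, y ^ 2 * Real.exp (-y ^ 2) := by
    apply MeasureTheory.setIntegral_nonneg measurableSet_Ioi
    intro y _; positivity
  -- integrability of h on Set.Ioo 0 1
  have h_int : IntegrableOn h (Set.Ioo 0 1) := by
    rw [← himg, MeasureTheory.integrableOn_image_iff_integrableOn_abs_deriv_smul
      measurableSet_Ioi hderiv hinj]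
    have hci : IntegrableOn
        (fun y => (2 * (3:ℝ) ^ α / Real.sqrt α) * (y ^ 2 * Real.exp (-y ^ 2))) (Set.Ioi b) :=
      hGint.const_mul _
    exact hci.congr_fun (fun y hy => (hpt hy).symm) measurableSet_Ioi
  -- pointwise bound g ≤ h on Set.Ioo 0 1
  have hgh : ∀ t ∈ Set.Ioo (0:ℝ) 1, Real.sqrt (Real.log (2 * t ^ (-(1/α)) + 1)) ≤ h t := by
    intro t ht
    apply Real.sqrt_le_sqrt
    have hrp : (1:ℝ) ≤ t ^ (-(1/α)) :=
      Real.one_le_rpow_of_pos_of_le_one_of_nonpos ht.1 ht.2.le (neg_nonpos.2 (by positivity))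
    have hle : 2 * t ^ (-(1/α)) + 1 ≤ 3 * t ^ (-(1/α)) := by linarith
    calc Real.log (2 * t ^ (-(1/α)) + 1) ≤ Real.log (3 * t ^ (-(1/α))) :=
          Real.log_le_log (by positivity) hle
      _ = Real.log 3 - (1/α) * Real.log t := by
          rw [Real.log_mul (by norm_num) (by positivity), Real.log_rpow ht.1]; ring
  -- integrability of g on Set.Ioo 0 1
  have g_int : IntegrableOn (fun t => Real.sqrt (Real.log (2 * t ^ (-(1/α)) + 1))) (Set.Ioo 0 1) := by
    apply MeasureTheory.Integrable.mono' h_int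
    · apply Measurable.aestronglyMeasurable
      exact Real.continuous_sqrt.measurable.comp <| Real.measurable_log.comp <|
        ((measurable_id'.pow_const _).const_mul 2).add measurable_const
    · filter_upwards [ae_restrict_mem measurableSet_Ioo] with t ht
      rw [Real.norm_eq_abs, abs_of_nonneg (Real.sqrt_nonneg _)]
      exact hgh t ht
  have hmono : ∫ t in Set.Ioo (0:ℝ) 1, Real.sqrt (Real.log (2 * t ^ (-(1/α)) + 1))
      ≤ ∫ t in Set.Ioo (0:ℝ) 1, h t :=
    MeasureTheory.setIntegral_mono_on g_int h_int measurableSet_Ioo hgh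
  have hC : 2 * (3:ℝ) ^ α ≤ (2:ℝ) ^ (2 * α + 2) := by
    have e1 : (2:ℝ) ^ (2 * α + 2) = ((2:ℝ) ^ ((2:ℝ) * α)) * (2:ℝ) ^ (2:ℝ) :=
      Real.rpow_add (by norm_num) _ _
    have e2 : (2:ℝ) ^ ((2:ℝ) * α) = (4:ℝ) ^ α := by
      rw [Real.rpow_mul (by norm_num : (0:ℝ) ≤ 2) 2 α, Real.rpow_two]
      norm_num
    have e3 : (2:ℝ) ^ (2:ℝ) = 4 := by
      rw [Real.rpow_two]; norm_num
    have h34 : (3:ℝ) ^ α ≤ (4:ℝ) ^ α :=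
      Real.rpow_le_rpow (by norm_num) (by norm_num) hα.le
    have h4pos : (0:ℝ) < (4:ℝ) ^ α := Real.rpow_pos_of_pos (by norm_num) α
    rw [e1, e2, e3]
    nlinarith
  rw [hchg] at hmono
  refine hmono.trans ?_
  rw [Cconst]
  have hsα : (0:ℝ) < Real.sqrt α := Real.sqrt_pos.2 hα
  apply mul_le_mul_of_nonneg_right _ hG0
  exact (div_le_div_iff_of_pos_right hsα).2 hC


/-- The entropy-integral estimate: ∫₀^{u^α} √(ln(2u ε^{−1/α} + 1)) dε ≤ C(α) u^α. -/
theorem stmt5 (u α : ℝ) (hu : 0 < u) (hα : 0 < α) :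
    ∫ ε in (0 : ℝ)..(u ^ α),
        Real.sqrt (Real.log (2 * u * ε ^ (-(1 / α)) + 1))
      ≤ Cconst α * u ^ α := by
  have huα : 0 < u ^ α := Real.rpow_pos_of_pos hu α
  set f : ℝ → ℝ := fun ε => Real.sqrt (Real.log (2 * u * ε ^ (-(1 / α)) + 1)) with hf
  have h1 := intervalIntegral.integral_comp_mul_right (a := 0) (b := 1) f huα.ne'
  simp only [zero_mul, one_mul] at h1
  have hinv : (0:ℝ) < 1 / α := by positivity
  have hne : -(1 / α) ≠ 0 := (neg_lt_zero.2 hinv).ne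
  have h2 : ∫ t in (0:ℝ)..1, f (t * u ^ α)
      = ∫ t in (0:ℝ)..1, Real.sqrt (Real.log (2 * t ^ (-(1 / α)) + 1)) := by
    apply intervalIntegral.integral_congr
    intro t ht
    rw [Set.uIcc_of_le (by norm_num : (0:ℝ) ≤ 1)] at ht
    rcases eq_or_lt_of_le ht.1 with h0 | h0
    · rw [hf]
      simp only [← h0, zero_mul]
      rw [Real.zero_rpow hne]
      norm_num
    · have hc : 2 * u * (t * u ^ α) ^ (-(1 / α)) = 2 * t ^ (-(1 / α)) := by
        rw [Real.mul_rpow h0.le huα.le]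
        have : (u ^ α) ^ (-(1 / α)) = u⁻¹ := by
          rw [← Real.rpow_mul hu.le, show α * (-(1 / α)) = -1 by field_simp,
            Real.rpow_neg_one]
        rw [this]
        field_simp
      rw [hf]
      simp only []
      rw [hc]
  have h3 : ∫ t in (0:ℝ)..1, Real.sqrt (Real.log (2 * t ^ (-(1 / α)) + 1))
      = ∫ t in Set.Ioo (0:ℝ) 1, Real.sqrt (Real.log (2 * t ^ (-(1 / α)) + 1)) := by
    rw [intervalIntegral.integral_of_le (by norm_num : (0:ℝ) ≤ 1),
      MeasureTheory.integral_Ioc_eq_integral_Ioo]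
  have h4 : ∫ ε in (0:ℝ)..(u ^ α), f ε
      = u ^ α * ∫ t in Set.Ioo (0:ℝ) 1, Real.sqrt (Real.log (2 * t ^ (-(1 / α)) + 1)) := by
    rw [← h3, ← h2, h1, smul_eq_mul]
    field_simp
  rw [h4, mul_comm (Cconst α)]
  exact mul_le_mul_of_nonneg_left (key α hα) huα.le
end

section
/- Let (X_k)_{k≥1} be a sequence of subgaussian random variables with subgaussian standards τ_k = τ(X_k). Then for all 0 ≤ i < j and all t ∈ ℝ, E[exp(t Σ_{k=i+1}^{j} X_k)] ≤ exp( t² (Σ_{k=i+1}^{j} τ_k)² / 2 ). -/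
open MeasureTheory ProbabilityTheory Real Filter Finset Set Topology

lemma subgStd_nonneg' {Ω : Type*} [MeasurableSpace Ω] (P : Measure Ω) (X : Ω → ℝ)
    (h : Subgaussian P X) : 0 ≤ subgStd P X := by
  obtain ⟨c, hc⟩ := h
  exact Real.sInf_nonneg fun b hb => hb.1

lemma isSubgaussianWith_of_lt {Ω : Type*} [MeasurableSpace Ω] (P : Measure Ω) (X : Ω → ℝ)
    (h : Subgaussian P X) {c' : ℝ} (hc' : subgStd P X < c') : IsSubgaussianWith P X c' := by
  obtain ⟨c, hc⟩ := h
  have hbdd : BddBelow {c : ℝ | IsSubgaussianWith P X c} := ⟨0, fun b hb => hb.1⟩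
  obtain ⟨d, hd, hdc'⟩ := exists_lt_of_csInf_lt (⟨c, Set.mem_setOf.2 hc⟩ : Set.Nonempty {c : ℝ | IsSubgaussianWith P X c}) hc'
  refine ⟨le_trans hd.1 hdc'.le, fun t => (hd.2 t).trans ?_⟩
  apply ENNReal.ofReal_le_ofReal
  apply Real.exp_le_exp.2
  have hd2 : d ^ 2 ≤ c' ^ 2 := by
    apply pow_le_pow_left₀ hd.1 hdc'.le
  nlinarith [sq_nonneg t]

/-- Remark 3.4: partial sums of a subgaussian sequence form a δ-subgaussian series. -/
theorem stmt6 {Ω : Type*} [MeasurableSpace Ω] (P : Measure Ω) [IsProbabilityMeasure P]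
    (X : ℕ → Ω → ℝ) (hmeas : ∀ k, 1 ≤ k → Measurable (X k)) (τ : ℕ → ℝ)
    (hsub : ∀ k, 1 ≤ k → Subgaussian P (X k))
    (hτ : ∀ k, 1 ≤ k → τ k = subgStd P (X k)) :
    ∀ i j : ℕ, i < j → ∀ t : ℝ,
      ∫⁻ ω, ENNReal.ofReal (Real.exp (t * ∑ k ∈ Finset.Icc (i + 1) j, X k ω)) ∂P
        ≤ ENNReal.ofReal
            (Real.exp (t ^ 2 * (∑ k ∈ Finset.Icc (i + 1) j, τ k) ^ 2 / 2)) := by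
  intro i j hij t
  set s : Finset ℕ := Finset.Icc (i + 1) j with hs
  have hsne : s.Nonempty := by
    refine ⟨i + 1, ?_⟩
    simp [hs, Nat.succ_le_of_lt hij]
  have hks : ∀ k ∈ s, 1 ≤ k := by
    intro k hk
    have := (Finset.mem_Icc.1 hk).1
    omega
  set a := ∫⁻ ω, ENNReal.ofReal (Real.exp (t * ∑ k ∈ s, X k ω)) ∂P with ha
  -- main claim for ε > 0
  have key : ∀ ε : ℝ, 0 < ε →
      a ≤ ENNReal.ofReal (Real.exp (t ^ 2 * (∑ k ∈ s, (τ k + ε)) ^ 2 / 2)) := by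
    intro ε hε
    set τ' : ℕ → ℝ := fun k => τ k + ε with hτ'
    have hτ'pos : ∀ k ∈ s, 0 < τ' k := by
      intro k hk
      have h1 : 0 ≤ τ k := by
        rw [hτ k (hks k hk)]
        exact subgStd_nonneg' P (X k) (hsub k (hks k hk))
      simp only [hτ']; linarith
    have hτ'sub : ∀ k ∈ s, IsSubgaussianWith P (X k) (τ' k) := by
      intro k hk
      apply isSubgaussianWith_of_lt P (X k) (hsub k (hks k hk))
      rw [← hτ k (hks k hk)]
      simp only [hτ']; linarith
    set S : ℝ := ∑ k ∈ s, τ' k with hS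
    have hSpos : 0 < S := Finset.sum_pos hτ'pos hsne
    set p : ℕ → ℝ := fun k => τ' k / S with hp
    have hpsum : ∑ k ∈ s, p k = 1 := by
      simp only [hp, ← Finset.sum_div, ← hS]
      field_simp
    have hppos : ∀ k ∈ s, 0 < p k := fun k hk => div_pos (hτ'pos k hk) hSpos
    set f : ℕ → Ω → ENNReal := fun k ω => ENNReal.ofReal (Real.exp ((t * S / τ' k) * X k ω))
      with hf
    have hfmeas : ∀ k ∈ s, AEMeasurable (f k) P := by
      intro k hk
      exact ((Real.measurable_exp.comp (measurable_const.mul (hmeas k (hks k hk)))).ennreal_ofReal).aemeasurable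
    have hrw : ∀ ω, ENNReal.ofReal (Real.exp (t * ∑ k ∈ s, X k ω))
        = ∏ k ∈ s, f k ω ^ p k := by
      intro ω
      have : ∀ k ∈ s, f k ω ^ p k = ENNReal.ofReal (Real.exp (t * X k ω)) := by
        intro k hk
        rw [hf]
        rw [ENNReal.ofReal_rpow_of_pos (Real.exp_pos _)]
        rw [← Real.exp_mul]
        congr 2
        have h1 := (hτ'pos k hk).ne'
        have h2 := hSpos.ne'
        field_simp [hp]
        rw [hp]; field_simp
      rw [Finset.prod_congr rfl this, ← ENNReal.ofReal_prod_of_nonneg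
        (fun k _ => (Real.exp_pos _).le), ← Real.exp_sum, Finset.mul_sum]
    calc a = ∫⁻ ω, ∏ k ∈ s, f k ω ^ p k ∂P := by
            rw [ha]; exact lintegral_congr fun ω => hrw ω
      _ ≤ ∏ k ∈ s, (∫⁻ ω, f k ω ∂P) ^ p k :=
            ENNReal.lintegral_prod_norm_pow_le s hfmeas hpsum (fun k hk => (hppos k hk).le)
      _ ≤ ∏ k ∈ s, (ENNReal.ofReal (Real.exp (τ' k ^ 2 * (t * S / τ' k) ^ 2 / 2))) ^ p k := by
            apply Finset.prod_le_prod
            · intro k _; exact zero_le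
            · intro k hk
              exact ENNReal.rpow_le_rpow ((hτ'sub k hk).2 (t * S / τ' k)) (hppos k hk).le
      _ = ENNReal.ofReal (Real.exp (t ^ 2 * (∑ k ∈ s, (τ k + ε)) ^ 2 / 2)) := by
            have heach : ∀ k ∈ s, (ENNReal.ofReal (Real.exp (τ' k ^ 2 * (t * S / τ' k) ^ 2 / 2))) ^ p k
                = ENNReal.ofReal (Real.exp (p k * (τ' k ^ 2 * (t * S / τ' k) ^ 2 / 2))) := by
              intro k hk
              rw [ENNReal.ofReal_rpow_of_pos (Real.exp_pos _), ← Real.exp_mul, mul_comm]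
            rw [Finset.prod_congr rfl heach, ← ENNReal.ofReal_prod_of_nonneg
              (fun k _ => (Real.exp_pos _).le), ← Real.exp_sum]
            congr 1
            have : ∀ k ∈ s, p k * (τ' k ^ 2 * (t * S / τ' k) ^ 2 / 2)
                = τ' k * S * t ^ 2 / 2 := by
              intro k hk
              have h1 := (hτ'pos k hk).ne'
              have h2 := hSpos.ne'
              field_simp [hp]
              rw [hp]; field_simp
            rw [Finset.sum_congr rfl this, ← Finset.sum_div, ← Finset.sum_mul, ← Finset.sum_mul,
              ← hS]
            ring
  -- pass to the limit ε → 0⁺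
  have htend : Tendsto (fun ε : ℝ =>
      ENNReal.ofReal (Real.exp (t ^ 2 * (∑ k ∈ s, (τ k + ε)) ^ 2 / 2))) (𝓝[>] (0:ℝ))
      (𝓝 (ENNReal.ofReal (Real.exp (t ^ 2 * (∑ k ∈ s, τ k) ^ 2 / 2)))) := by
    have hcont : Continuous (fun ε : ℝ =>
        ENNReal.ofReal (Real.exp (t ^ 2 * (∑ k ∈ s, (τ k + ε)) ^ 2 / 2))) := by
      apply ENNReal.continuous_ofReal.comp
      apply Real.continuous_exp.comp
      continuity
    have := hcont.tendsto 0
    simp only [add_zero] at this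
    exact this.mono_left nhdsWithin_le_nhds
  refine ge_of_tendsto htend ?_
  filter_upwards [self_mem_nhdsWithin] with ε hε
  exact key ε hε
end

section
/- Let (X_k)_{k≥1} be a negatively dependent sequence of subgaussian random variables with subgaussian standards τ_k = τ(X_k), and let (a_k)_{k≥1} be real numbers. Then for all 0 ≤ n < m and all t ∈ ℝ, E[exp(t Σ_{k=n+1}^{m} a_k X_k)] ≤ exp( t² Σ_{k=n+1}^{m} a_k² τ_k² ). -/
open MeasureTheory ProbabilityTheory Real Filter Finset Set Topology

open scoped ENNReal

section Aux

variable {Ω : Type*} [MeasurableSpace Ω]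

lemma aux_isSubgaussianWith_subgStd (P : Measure Ω) (X : Ω → ℝ) (h : Subgaussian P X) :
    IsSubgaussianWith P X (subgStd P X) := by
  obtain ⟨c0, hc0⟩ := h
  have hne : Set.Nonempty {c : ℝ | IsSubgaussianWith P X c} := ⟨c0, hc0⟩
  have hτ0 : 0 ≤ subgStd P X := le_csInf hne fun c hc => hc.1
  refine ⟨hτ0, fun t => ?_⟩
  have key : ∀ n : ℕ, ∫⁻ ω, ENNReal.ofReal (Real.exp (t * X ω)) ∂P
      ≤ ENNReal.ofReal (Real.exp ((subgStd P X + 1 / (n + 1)) ^ 2 * t ^ 2 / 2)) := by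
    intro n
    obtain ⟨c, hcS, hclt⟩ := Real.lt_sInf_add_pos hne
      (show (0:ℝ) < 1 / (n + 1) by positivity)
    refine (hcS.2 t).trans (ENNReal.ofReal_le_ofReal (Real.exp_le_exp.2 ?_))
    have hc0' : 0 ≤ c := hcS.1
    have hclt' : c < subgStd P X + 1 / (n + 1) := hclt
    have h2 : c ^ 2 ≤ (subgStd P X + 1 / (n + 1)) ^ 2 := by nlinarith [hclt'.le]
    nlinarith [sq_nonneg t]
  have h1 : Filter.Tendsto (fun n : ℕ => subgStd P X + 1 / ((n:ℝ) + 1)) Filter.atTop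
      (nhds (subgStd P X)) := by
    simpa using tendsto_const_nhds.add (tendsto_one_div_add_atTop_nhds_zero_nat (𝕜 := ℝ))
  have h2 : Filter.Tendsto
      (fun n : ℕ => (subgStd P X + 1 / ((n:ℝ) + 1)) ^ 2 * t ^ 2 / 2) Filter.atTop
      (nhds ((subgStd P X) ^ 2 * t ^ 2 / 2)) := ((h1.pow 2).mul_const _).div_const 2
  exact ge_of_tendsto'
    ((ENNReal.continuous_ofReal.tendsto _).comp ((Real.continuous_exp.tendsto _).comp h2)) key

lemma aux_negDep_lower (P : Measure Ω) (X : ℕ → Ω → ℝ) (hND : NegDep P X)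
    (u : Finset ℕ) (d : ℕ → ℝ) :
    P {ω | ∀ k ∈ u, X k ω < d k} ≤ ∏ k ∈ u, P {ω | X k ω < d k} := by
  have hset : {ω | ∀ k ∈ u, X k ω < d k}
      = ⋃ n : ℕ, {ω | ∀ k ∈ u, X k ω ≤ d k - 1 / (n + 1)} := by
    ext ω
    simp only [Set.mem_setOf_eq, Set.mem_iUnion]
    constructor
    · intro h
      rcases u.eq_empty_or_nonempty with rfl | hu
      · exact ⟨0, by simp⟩
      · have hvne : (u.image fun k => d k - X k ω).Nonempty := hu.image _
        have hmin : 0 < (u.image fun k => d k - X k ω).min' hvne := by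
          obtain ⟨k0, hk0, hk0e⟩ := Finset.mem_image.mp
            ((u.image fun k => d k - X k ω).min'_mem hvne)
          rw [← hk0e]
          have := h k0 hk0
          linarith
        obtain ⟨n, hn⟩ := exists_nat_one_div_lt hmin
        refine ⟨n, fun k hk => ?_⟩
        have h2 : (u.image fun k => d k - X k ω).min' hvne ≤ d k - X k ω :=
          Finset.min'_le _ _ (Finset.mem_image_of_mem _ hk)
        linarith
    · rintro ⟨n, h⟩ k hk
      have h2 := h k hk
      have h3 : (0:ℝ) < 1 / (n + 1) := by positivity
      linarith
  have hmono : Monotone fun n : ℕ => {ω | ∀ k ∈ u, X k ω ≤ d k - 1 / (n + 1)} := by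
    intro p q hpq ω hω k hk
    have h1 : 1 / ((q:ℝ) + 1) ≤ 1 / ((p:ℝ) + 1) := by
      apply one_div_le_one_div_of_le
      · positivity
      · exact_mod_cast Nat.succ_le_succ hpq
    have h2 := hω k hk
    linarith
  rw [hset, hmono.directed_le.measure_iUnion]
  refine iSup_le fun n => ?_
  refine le_trans (hND u fun k => d k - 1 / (n + 1)).1 ?_
  refine Finset.prod_le_prod' fun k _ => measure_mono fun ω hω => ?_
  simp only [Set.mem_setOf_eq] at hω ⊢
  have h3 : (0:ℝ) < 1 / ((n:ℝ) + 1) := by positivity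
  linarith


lemma aux_measSet (X : ℕ → Ω → ℝ) (u : Finset ℕ) (hu : ∀ k ∈ u, Measurable (X k))
    (c : ℕ → ℝ) : MeasurableSet {ω | ∀ k ∈ u, c k < X k ω} := by
  have h : {ω | ∀ k ∈ u, c k < X k ω} = ⋂ k ∈ u, {ω | c k < X k ω} := by
    ext ω; simp
  rw [h]
  exact MeasurableSet.biInter u.countable_toSet fun k hk =>
    measurableSet_lt measurable_const (hu k hk)

lemma aux_keyM (P : Measure Ω) [IsProbabilityMeasure P] (X : ℕ → Ω → ℝ)
    (HND : ∀ (u : Finset ℕ) (c : ℕ → ℝ),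
      P {ω | ∀ k ∈ u, c k < X k ω} ≤ ∏ k ∈ u, P {ω | c k < X k ω})
    (b : ℕ → ℝ) (s : Finset ℕ) :
    (∀ k ∈ s, Measurable (X k)) → (∀ k ∈ s, 0 ≤ b k) →
    ∀ u : Finset ℕ, (∀ k ∈ u, Measurable (X k)) → Disjoint s u → ∀ c : ℕ → ℝ,
    ∫⁻ ω, ({ω | ∀ k ∈ u, c k < X k ω}.indicator (fun _ => (1:ℝ≥0∞)) ω)
        * ∏ k ∈ s, ENNReal.ofReal (Real.exp (b k * X k ω)) ∂P
      ≤ (∏ k ∈ u, P {ω | c k < X k ω})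
        * ∏ k ∈ s, ∫⁻ ω, ENNReal.ofReal (Real.exp (b k * X k ω)) ∂P := by
  induction s using Finset.induction_on with
  | empty =>
    intro _ _ u hu _ c
    simp only [Finset.prod_empty, mul_one]
    rw [lintegral_indicator (aux_measSet X u hu c), setLIntegral_one]
    exact HND u c
  | @insert j s' hj ih =>
    intro hms hbs u hmu hdisj c
    have hjmem : j ∈ insert j s' := Finset.mem_insert_self j s'
    have hmj : Measurable (X j) := hms j hjmem
    have hms' : ∀ k ∈ s', Measurable (X k) := fun k hk => hms k (Finset.mem_insert_of_mem hk)
    have hbs' : ∀ k ∈ s', 0 ≤ b k := fun k hk => hbs k (Finset.mem_insert_of_mem hk)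
    have hju : j ∉ u := Finset.disjoint_left.mp hdisj hjmem
    have hdisj' : Disjoint s' u := (Finset.disjoint_insert_left.mp hdisj).2
    rcases eq_or_lt_of_le (hbs j hjmem) with hbj | hbj
    · -- case b j = 0
      have h1 : ∀ ω, ENNReal.ofReal (Real.exp (b j * X j ω)) = 1 := by
        intro ω; rw [← hbj]; norm_num
      simp only [Finset.prod_insert hj, h1, one_mul, lintegral_one, measure_univ]
      exact ih hms' hbs' u hmu hdisj' c
    · -- case 0 < b j
      set A : Set (Ω × ℝ) := {p | p.2 < Real.exp (b j * X j p.1)} with hAdef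
      have hfm : Measurable fun ω => Real.exp (b j * X j ω) :=
        Real.measurable_exp.comp (hmj.const_mul (b j))
      have hgm : Measurable fun ω => ∏ k ∈ s', ENNReal.ofReal (Real.exp (b k * X k ω)) :=
        Finset.measurable_prod _ fun k hk =>
          ENNReal.measurable_ofReal.comp (Real.measurable_exp.comp ((hms' k hk).const_mul (b k)))
      have hUmeas : MeasurableSet {ω | ∀ k ∈ u, c k < X k ω} := aux_measSet X u hmu c
      have hA : MeasurableSet A := measurableSet_lt measurable_snd (hfm.comp measurable_fst)
      have hgtop : ∀ ω, (∏ k ∈ s', ENNReal.ofReal (Real.exp (b k * X k ω))) ≠ ⊤ := by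
        intro ω
        exact (ENNReal.prod_lt_top fun k _ => ENNReal.ofReal_lt_top).ne
      have hCtop : ∀ ω, ({ω | ∀ k ∈ u, c k < X k ω}.indicator (fun _ => (1:ℝ≥0∞)) ω)
          * ∏ k ∈ s', ENNReal.ofReal (Real.exp (b k * X k ω)) ≠ ⊤ := fun ω =>
        ENNReal.mul_ne_top
          (by by_cases h : ω ∈ {ω | ∀ k ∈ u, c k < X k ω} <;> simp [h]) (hgtop ω)
      have key1 : ∀ ω, ENNReal.ofReal (Real.exp (b j * X j ω))
          = ∫⁻ t in Set.Ioi (0:ℝ), A.indicator (fun _ => (1:ℝ≥0∞)) (ω, t) := by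
        intro ω
        have h2 : ∀ t : ℝ, A.indicator (fun _ => (1:ℝ≥0∞)) (ω, t)
            = (Set.Iio (Real.exp (b j * X j ω))).indicator (fun _ => (1:ℝ≥0∞)) t := by
          intro t
          by_cases h : t < Real.exp (b j * X j ω) <;>
            simp [Set.indicator_apply, hAdef, h, Set.mem_setOf_eq]
        simp only [h2]
        rw [lintegral_indicator measurableSet_Iio, setLIntegral_one,
          Measure.restrict_apply measurableSet_Iio, Set.Iio_inter_Ioi, Real.volume_Ioo,
          sub_zero]
      have hAc : ∀ t : ℝ, 0 < t → ∀ ω : Ω,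
          ((ω, t) ∈ A ↔ Real.log t / b j < X j ω) := by
        intro t ht ω
        rw [hAdef]
        simp only [Set.mem_setOf_eq]
        rw [← Real.log_lt_iff_lt_exp ht, div_lt_iff₀' hbj]
      have hiff : ∀ t : ℝ, 0 < t → ∀ ω : Ω,
          ((∀ k ∈ insert j u, Function.update c j (Real.log t / b j) k < X k ω)
            ↔ ((ω, t) ∈ A ∧ ∀ k ∈ u, c k < X k ω)) := by
        intro t ht ω
        rw [Finset.forall_mem_insert, Function.update_self]
        constructor
        · rintro ⟨h1, h2⟩
          refine ⟨(hAc t ht ω).2 h1, fun k hk => ?_⟩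
          have h3 := h2 k hk
          rwa [Function.update_of_ne (ne_of_mem_of_not_mem hk hju)] at h3
        · rintro ⟨h1, h2⟩
          refine ⟨(hAc t ht ω).1 h1, fun k hk => ?_⟩
          rw [Function.update_of_ne (ne_of_mem_of_not_mem hk hju)]
          exact h2 k hk
      have hmeasprod : AEMeasurable (fun p : Ω × ℝ =>
          A.indicator (fun _ => (1:ℝ≥0∞)) p
            * (({ω | ∀ k ∈ u, c k < X k ω}.indicator (fun _ => (1:ℝ≥0∞)) p.1)
              * ∏ k ∈ s', ENNReal.ofReal (Real.exp (b k * X k p.1))))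
          (P.prod (volume.restrict (Set.Ioi (0:ℝ)))) :=
        ((measurable_one.indicator hA).mul
          (((measurable_one.indicator hUmeas).comp measurable_fst).mul
            (hgm.comp measurable_fst))).aemeasurable
      have hanti : Measurable fun t : ℝ => P {ω | t < Real.exp (b j * X j ω)} := by
        have : Antitone fun t : ℝ => P {ω | t < Real.exp (b j * X j ω)} :=
          fun t1 t2 h12 => measure_mono fun ω hω => lt_of_le_of_lt h12 hω
        exact this.measurable
      calc
        ∫⁻ ω, ({ω | ∀ k ∈ u, c k < X k ω}.indicator (fun _ => (1:ℝ≥0∞)) ω)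
            * ∏ k ∈ insert j s', ENNReal.ofReal (Real.exp (b k * X k ω)) ∂P
            = ∫⁻ ω, (∫⁻ t in Set.Ioi (0:ℝ), A.indicator (fun _ => (1:ℝ≥0∞)) (ω, t)
              * (({ω | ∀ k ∈ u, c k < X k ω}.indicator (fun _ => (1:ℝ≥0∞)) ω)
                * ∏ k ∈ s', ENNReal.ofReal (Real.exp (b k * X k ω)))) ∂P := by
          refine lintegral_congr fun ω => ?_
          rw [Finset.prod_insert hj, lintegral_mul_const' _ _ (hCtop ω), ← key1 ω]
          ring
        _ = ∫⁻ t in Set.Ioi (0:ℝ), ∫⁻ ω, A.indicator (fun _ => (1:ℝ≥0∞)) (ω, t)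
              * (({ω | ∀ k ∈ u, c k < X k ω}.indicator (fun _ => (1:ℝ≥0∞)) ω)
                * ∏ k ∈ s', ENNReal.ofReal (Real.exp (b k * X k ω))) ∂P :=
          lintegral_lintegral_swap hmeasprod
        _ ≤ ∫⁻ t in Set.Ioi (0:ℝ), P {ω | t < Real.exp (b j * X j ω)}
              * ((∏ k ∈ u, P {ω | c k < X k ω})
                * ∏ k ∈ s', ∫⁻ ω, ENNReal.ofReal (Real.exp (b k * X k ω)) ∂P) := by
          refine lintegral_mono_ae (((ae_restrict_iff' measurableSet_Ioi).2
            (ae_of_all _ fun t ht => ?_)))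
          have ht' : (0:ℝ) < t := ht
          calc
            ∫⁻ ω, A.indicator (fun _ => (1:ℝ≥0∞)) (ω, t)
                * (({ω | ∀ k ∈ u, c k < X k ω}.indicator (fun _ => (1:ℝ≥0∞)) ω)
                  * ∏ k ∈ s', ENNReal.ofReal (Real.exp (b k * X k ω))) ∂P
                = ∫⁻ ω, ({ω | ∀ k ∈ insert j u,
                      Function.update c j (Real.log t / b j) k < X k ω}.indicator
                    (fun _ => (1:ℝ≥0∞)) ω)
                  * ∏ k ∈ s', ENNReal.ofReal (Real.exp (b k * X k ω)) ∂P := by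
              refine lintegral_congr fun ω => ?_
              by_cases h1 : (ω, t) ∈ A
              · by_cases h2 : ω ∈ {ω | ∀ k ∈ u, c k < X k ω}
                · have h3 : ω ∈ {ω | ∀ k ∈ insert j u,
                      Function.update c j (Real.log t / b j) k < X k ω} :=
                    (hiff t ht' ω).2 ⟨h1, h2⟩
                  rw [Set.indicator_of_mem h1, Set.indicator_of_mem h2,
                    Set.indicator_of_mem h3]
                  ring
                · have h3 : ω ∉ {ω | ∀ k ∈ insert j u,
                      Function.update c j (Real.log t / b j) k < X k ω} :=
                    fun hh => h2 ((hiff t ht' ω).1 hh).2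
                  rw [Set.indicator_of_mem h1, Set.indicator_of_notMem h2,
                    Set.indicator_of_notMem h3]
                  ring
              · have h3 : ω ∉ {ω | ∀ k ∈ insert j u,
                    Function.update c j (Real.log t / b j) k < X k ω} :=
                  fun hh => h1 ((hiff t ht' ω).1 hh).1
                rw [Set.indicator_of_notMem h1, Set.indicator_of_notMem h3]
                ring
            _ ≤ (∏ k ∈ insert j u,
                  P {ω | Function.update c j (Real.log t / b j) k < X k ω})
                * ∏ k ∈ s', ∫⁻ ω, ENNReal.ofReal (Real.exp (b k * X k ω)) ∂P := by
              refine ih hms' hbs' (insert j u) ?_ ?_ _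
              · intro k hk
                rcases Finset.mem_insert.mp hk with rfl | hk
                exacts [hmj, hmu k hk]
              · exact Finset.disjoint_insert_right.mpr ⟨hj, hdisj'⟩
            _ = P {ω | t < Real.exp (b j * X j ω)}
                * ((∏ k ∈ u, P {ω | c k < X k ω})
                  * ∏ k ∈ s', ∫⁻ ω, ENNReal.ofReal (Real.exp (b k * X k ω)) ∂P) := by
              rw [Finset.prod_insert hju]
              have e1 : {ω | Function.update c j (Real.log t / b j) j < X j ω}
                  = {ω | t < Real.exp (b j * X j ω)} := by
                ext ω
                simp only [Set.mem_setOf_eq, Function.update_self]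
                rw [div_lt_iff₀' hbj, Real.log_lt_iff_lt_exp ht']
              have e2 : ∀ k ∈ u, P {ω | Function.update c j (Real.log t / b j) k < X k ω}
                  = P {ω | c k < X k ω} := fun k hk => by
                rw [Function.update_of_ne (ne_of_mem_of_not_mem hk hju)]
              rw [e1, Finset.prod_congr rfl e2, mul_assoc]
        _ = (∫⁻ ω, ENNReal.ofReal (Real.exp (b j * X j ω)) ∂P)
              * ((∏ k ∈ u, P {ω | c k < X k ω})
                * ∏ k ∈ s', ∫⁻ ω, ENNReal.ofReal (Real.exp (b k * X k ω)) ∂P) := by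
          rw [lintegral_mul_const'' _ hanti.aemeasurable,
            ← lintegral_eq_lintegral_meas_lt P (ae_of_all _ fun ω => (Real.exp_pos _).le)
              hfm.aemeasurable]
        _ = (∏ k ∈ u, P {ω | c k < X k ω})
            * ∏ k ∈ insert j s', ∫⁻ ω, ENNReal.ofReal (Real.exp (b k * X k ω)) ∂P := by
          rw [Finset.prod_insert hj]
          ring


lemma aux_prodBound (P : Measure Ω) [IsProbabilityMeasure P] (Y : ℕ → Ω → ℝ)
    (HND : ∀ (u : Finset ℕ) (c : ℕ → ℝ),
      P {ω | ∀ k ∈ u, c k < Y k ω} ≤ ∏ k ∈ u, P {ω | c k < Y k ω})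
    (b : ℕ → ℝ) (s : Finset ℕ) (hm : ∀ k ∈ s, Measurable (Y k)) (hb : ∀ k ∈ s, 0 ≤ b k) :
    ∫⁻ ω, ∏ k ∈ s, ENNReal.ofReal (Real.exp (b k * Y k ω)) ∂P
      ≤ ∏ k ∈ s, ∫⁻ ω, ENNReal.ofReal (Real.exp (b k * Y k ω)) ∂P := by
  have h := aux_keyM P Y HND b s hm hb ∅ (by simp) (Finset.disjoint_empty_right _) 0
  simpa using h

end Aux

/-- Proposition 4.6 (2): weighted sums of negatively dependent subgaussian
random variables. -/
theorem stmt11 {Ω : Type*} [MeasurableSpace Ω] (P : Measure Ω) [IsProbabilityMeasure P]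
    (X : ℕ → Ω → ℝ) (hmeas : ∀ k, 1 ≤ k → Measurable (X k))
    (hND : NegDep P X) (τ : ℕ → ℝ)
    (hsub : ∀ k, 1 ≤ k → Subgaussian P (X k))
    (hτ : ∀ k, 1 ≤ k → τ k = subgStd P (X k))
    (a : ℕ → ℝ) :
    ∀ n m : ℕ, n < m → ∀ t : ℝ,
      ∫⁻ ω, ENNReal.ofReal (Real.exp (t * ∑ k ∈ Finset.Icc (n + 1) m, a k * X k ω)) ∂P
        ≤ ENNReal.ofReal
            (Real.exp (t ^ 2 * ∑ k ∈ Finset.Icc (n + 1) m, a k ^ 2 * τ k ^ 2)) := by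
    classical
  intro n m hnm t
  set s : Finset ℕ := Finset.Icc (n + 1) m with hs
  have hks : ∀ k ∈ s, 1 ≤ k := fun k hk =>
    le_trans (Nat.le_add_left 1 n) (Finset.mem_Icc.mp hk).1
  set A : Finset ℕ := s.filter fun k => 0 ≤ t * a k with hA
  set B : Finset ℕ := s.filter fun k => ¬ 0 ≤ t * a k with hB
  have hAs : A ⊆ s := Finset.filter_subset _ _
  have hBs : B ⊆ s := Finset.filter_subset _ _
  have hsingle : ∀ k, 1 ≤ k → ∀ r : ℝ,
      ∫⁻ ω, ENNReal.ofReal (Real.exp (r * X k ω)) ∂P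
        ≤ ENNReal.ofReal (Real.exp (τ k ^ 2 * r ^ 2 / 2)) := by
    intro k hk r
    rw [hτ k hk]
    exact (aux_isSubgaussianWith_subgStd P (X k) (hsub k hk)).2 r
  have hsplit : ∀ ω, t * ∑ k ∈ s, a k * X k ω
      = (∑ k ∈ A, t * a k * X k ω) + ∑ k ∈ B, t * a k * X k ω := by
    intro ω
    rw [Finset.mul_sum,
      ← Finset.sum_filter_add_sum_filter_not s (fun k => 0 ≤ t * a k)
        (fun k => t * (a k * X k ω))]
    congr 1 <;> exact Finset.sum_congr rfl fun k _ => by ring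
  have hFm : Measurable fun ω => ∑ k ∈ A, t * a k * X k ω :=
    Finset.measurable_sum _ fun k hk => (hmeas k (hks k (hAs hk))).const_mul _
  have hGm : Measurable fun ω => ∑ k ∈ B, t * a k * X k ω :=
    Finset.measurable_sum _ fun k hk => (hmeas k (hks k (hBs hk))).const_mul _
  -- A-side bound
  have hboundA : ∫⁻ ω, ENNReal.ofReal (Real.exp ((2:ℝ) * ∑ k ∈ A, t * a k * X k ω)) ∂P
      ≤ ENNReal.ofReal (Real.exp (∑ k ∈ A, 2 * (t ^ 2 * (a k ^ 2 * τ k ^ 2)))) := by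
    have h1 : ∀ ω, ENNReal.ofReal (Real.exp ((2:ℝ) * ∑ k ∈ A, t * a k * X k ω))
        = ∏ k ∈ A, ENNReal.ofReal (Real.exp ((2 * (t * a k)) * X k ω)) := by
      intro ω
      rw [← ENNReal.ofReal_prod_of_nonneg fun k _ => (Real.exp_pos _).le, ← Real.exp_sum]
      congr 1
      rw [Real.exp_eq_exp, Finset.mul_sum]
      exact Finset.sum_congr rfl fun k _ => by ring
    simp only [h1]
    refine le_trans (aux_prodBound P X (fun u c => (hND u c).2)
      (fun k => 2 * (t * a k)) A (fun k hk => hmeas k (hks k (hAs hk)))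
      (fun k hk => by have h := (Finset.mem_filter.mp hk).2; show (0:ℝ) ≤ 2 * (t * a k); linarith)) ?_
    calc ∏ k ∈ A, ∫⁻ ω, ENNReal.ofReal (Real.exp ((2 * (t * a k)) * X k ω)) ∂P
        ≤ ∏ k ∈ A, ENNReal.ofReal (Real.exp (τ k ^ 2 * (2 * (t * a k)) ^ 2 / 2)) :=
          Finset.prod_le_prod' fun k hk => hsingle k (hks k (hAs hk)) _
      _ = ENNReal.ofReal (Real.exp (∑ k ∈ A, 2 * (t ^ 2 * (a k ^ 2 * τ k ^ 2)))) := by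
          rw [← ENNReal.ofReal_prod_of_nonneg fun k _ => (Real.exp_pos _).le, ← Real.exp_sum]
          congr 1
          rw [Real.exp_eq_exp]
          exact Finset.sum_congr rfl fun k _ => by ring
  -- B-side bound
  have HNDY : ∀ (u : Finset ℕ) (c : ℕ → ℝ),
      P {ω | ∀ k ∈ u, c k < -X k ω} ≤ ∏ k ∈ u, P {ω | c k < -X k ω} := by
    intro u c
    have h1 : {ω | ∀ k ∈ u, c k < -X k ω} = {ω | ∀ k ∈ u, X k ω < -c k} := by
      ext ω
      simp only [Set.mem_setOf_eq]
      exact forall₂_congr fun k _ => by constructor <;> intro <;> linarith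
    have h2 : ∀ k : ℕ, {ω | c k < -X k ω} = {ω | X k ω < -c k} := fun k => by
      ext ω
      simp only [Set.mem_setOf_eq]
      constructor <;> intro <;> linarith
    rw [h1]
    refine (aux_negDep_lower P X hND u fun k => -c k).trans ?_
    exact le_of_eq (Finset.prod_congr rfl fun k _ => by rw [h2 k])
  have hboundB : ∫⁻ ω, ENNReal.ofReal (Real.exp ((2:ℝ) * ∑ k ∈ B, t * a k * X k ω)) ∂P
      ≤ ENNReal.ofReal (Real.exp (∑ k ∈ B, 2 * (t ^ 2 * (a k ^ 2 * τ k ^ 2)))) := by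
    have h1 : ∀ ω, ENNReal.ofReal (Real.exp ((2:ℝ) * ∑ k ∈ B, t * a k * X k ω))
        = ∏ k ∈ B, ENNReal.ofReal (Real.exp ((-(2 * (t * a k))) * -X k ω)) := by
      intro ω
      rw [← ENNReal.ofReal_prod_of_nonneg fun k _ => (Real.exp_pos _).le, ← Real.exp_sum]
      congr 1
      rw [Real.exp_eq_exp, Finset.mul_sum]
      exact Finset.sum_congr rfl fun k _ => by ring
    simp only [h1]
    refine le_trans (aux_prodBound P (fun k ω => -X k ω) HNDY
      (fun k => -(2 * (t * a k))) B (fun k hk => (hmeas k (hks k (hBs hk))).neg)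
      (fun k hk => by have h := (Finset.mem_filter.mp hk).2; push_neg at h; show (0:ℝ) ≤ -(2 * (t * a k)); linarith)) ?_
    calc ∏ k ∈ B, ∫⁻ ω, ENNReal.ofReal (Real.exp ((-(2 * (t * a k))) * -X k ω)) ∂P
        = ∏ k ∈ B, ∫⁻ ω, ENNReal.ofReal (Real.exp ((2 * (t * a k)) * X k ω)) ∂P := by
          refine Finset.prod_congr rfl fun k _ => lintegral_congr fun ω => ?_
          congr 2
          ring
      _ ≤ ∏ k ∈ B, ENNReal.ofReal (Real.exp (τ k ^ 2 * (2 * (t * a k)) ^ 2 / 2)) :=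
          Finset.prod_le_prod' fun k hk => hsingle k (hks k (hBs hk)) _
      _ = ENNReal.ofReal (Real.exp (∑ k ∈ B, 2 * (t ^ 2 * (a k ^ 2 * τ k ^ 2)))) := by
          rw [← ENNReal.ofReal_prod_of_nonneg fun k _ => (Real.exp_pos _).le, ← Real.exp_sum]
          congr 1
          rw [Real.exp_eq_exp]
          exact Finset.sum_congr rfl fun k _ => by ring
  -- Cauchy–Schwarz assembly
  have hconj : Real.HolderConjugate 2 2 := Real.HolderConjugate.two_two
  have hFme : AEMeasurable (fun ω => ENNReal.ofReal (Real.exp (∑ k ∈ A, t * a k * X k ω))) P :=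
    (ENNReal.measurable_ofReal.comp (Real.measurable_exp.comp hFm)).aemeasurable
  have hGme : AEMeasurable (fun ω => ENNReal.ofReal (Real.exp (∑ k ∈ B, t * a k * X k ω))) P :=
    (ENNReal.measurable_ofReal.comp (Real.measurable_exp.comp hGm)).aemeasurable
  have hsq : ∀ v : ℝ, ENNReal.ofReal (Real.exp v) ^ (2:ℝ) = ENNReal.ofReal (Real.exp (2 * v)) := by
    intro v
    rw [ENNReal.ofReal_rpow_of_pos (Real.exp_pos v), Real.rpow_def_of_pos (Real.exp_pos v),
      Real.log_exp]
    congr 2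
    ring
  have hhalf : ∀ v : ℝ,
      ENNReal.ofReal (Real.exp v) ^ (1 / 2 : ℝ) = ENNReal.ofReal (Real.exp (v / 2)) := by
    intro v
    rw [ENNReal.ofReal_rpow_of_pos (Real.exp_pos v), Real.rpow_def_of_pos (Real.exp_pos v),
      Real.log_exp]
    congr 2
    ring
  have hH := ENNReal.lintegral_mul_le_Lp_mul_Lq P hconj hFme hGme
  simp only [Pi.mul_apply] at hH
  have hA2 : (∫⁻ ω, ENNReal.ofReal (Real.exp (∑ k ∈ A, t * a k * X k ω)) ^ (2:ℝ) ∂P)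
      ≤ ENNReal.ofReal (Real.exp (∑ k ∈ A, 2 * (t ^ 2 * (a k ^ 2 * τ k ^ 2)))) := by
    calc (∫⁻ ω, ENNReal.ofReal (Real.exp (∑ k ∈ A, t * a k * X k ω)) ^ (2:ℝ) ∂P)
        = ∫⁻ ω, ENNReal.ofReal (Real.exp ((2:ℝ) * ∑ k ∈ A, t * a k * X k ω)) ∂P :=
          lintegral_congr fun ω => hsq _
      _ ≤ _ := hboundA
  have hB2 : (∫⁻ ω, ENNReal.ofReal (Real.exp (∑ k ∈ B, t * a k * X k ω)) ^ (2:ℝ) ∂P)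
      ≤ ENNReal.ofReal (Real.exp (∑ k ∈ B, 2 * (t ^ 2 * (a k ^ 2 * τ k ^ 2)))) := by
    calc (∫⁻ ω, ENNReal.ofReal (Real.exp (∑ k ∈ B, t * a k * X k ω)) ^ (2:ℝ) ∂P)
        = ∫⁻ ω, ENNReal.ofReal (Real.exp ((2:ℝ) * ∑ k ∈ B, t * a k * X k ω)) ∂P :=
          lintegral_congr fun ω => hsq _
      _ ≤ _ := hboundB
  calc ∫⁻ ω, ENNReal.ofReal (Real.exp (t * ∑ k ∈ s, a k * X k ω)) ∂P
      = ∫⁻ ω, ENNReal.ofReal (Real.exp (∑ k ∈ A, t * a k * X k ω))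
          * ENNReal.ofReal (Real.exp (∑ k ∈ B, t * a k * X k ω)) ∂P := by
        refine lintegral_congr fun ω => ?_
        rw [hsplit ω, Real.exp_add, ENNReal.ofReal_mul (Real.exp_pos _).le]
    _ ≤ (∫⁻ ω, ENNReal.ofReal (Real.exp (∑ k ∈ A, t * a k * X k ω)) ^ (2:ℝ) ∂P) ^ (1/2:ℝ)
        * (∫⁻ ω, ENNReal.ofReal (Real.exp (∑ k ∈ B, t * a k * X k ω)) ^ (2:ℝ) ∂P) ^ (1/2:ℝ) :=
        hH
    _ ≤ (ENNReal.ofReal (Real.exp (∑ k ∈ A, 2 * (t ^ 2 * (a k ^ 2 * τ k ^ 2))))) ^ (1/2:ℝ)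
        * (ENNReal.ofReal (Real.exp (∑ k ∈ B, 2 * (t ^ 2 * (a k ^ 2 * τ k ^ 2))))) ^ (1/2:ℝ) :=
        mul_le_mul' (ENNReal.rpow_le_rpow hA2 (by norm_num))
          (ENNReal.rpow_le_rpow hB2 (by norm_num))
    _ = ENNReal.ofReal (Real.exp (t ^ 2 * ∑ k ∈ s, a k ^ 2 * τ k ^ 2)) := by
        rw [hhalf, hhalf, ← ENNReal.ofReal_mul (Real.exp_pos _).le, ← Real.exp_add]
        congr 1
        have e1 : (∑ k ∈ A, 2 * (t ^ 2 * (a k ^ 2 * τ k ^ 2))) / 2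
            = ∑ k ∈ A, t ^ 2 * (a k ^ 2 * τ k ^ 2) := by
          rw [Finset.sum_div]
          exact Finset.sum_congr rfl fun k _ => by ring
        have e2 : (∑ k ∈ B, 2 * (t ^ 2 * (a k ^ 2 * τ k ^ 2))) / 2
            = ∑ k ∈ B, t ^ 2 * (a k ^ 2 * τ k ^ 2) := by
          rw [Finset.sum_div]
          exact Finset.sum_congr rfl fun k _ => by ring
        rw [e1, e2, Finset.sum_filter_add_sum_filter_not, ← Finset.mul_sum]
end

section
/- Let β > 0 and let (X_k)_{k≥1} be a (𝓑, c²)-conditionally subgaussian sequence with sup_{k≥1} c_k < ∞. Then P-almost surely, lim_{n→∞} (n (ln n)^{1+β})^{−1/2} Σ_{k=1}^{n} X_k = 0. -/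
open MeasureTheory ProbabilityTheory Real Filter Finset Set Topology

/-- MGF bound for partial sums of a conditionally subgaussian sequence. -/
lemma mgf_bound_aux {Ω : Type*} {mΩ : MeasurableSpace Ω} (P : Measure Ω) [IsProbabilityMeasure P]
    (B : ℕ → MeasurableSpace Ω) (c : ℕ → ℝ) (X : ℕ → Ω → ℝ)
    (hCS : CondSubgaussianSeq P B c X) (M : ℝ) (hM : ∀ k, 1 ≤ k → c k ≤ M) :
    ∀ n : ℕ, ∀ t : ℝ,
      Integrable (fun ω => Real.exp (t * ∑ k ∈ Finset.Icc 1 n, X k ω)) P ∧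
      ∫ ω, Real.exp (t * ∑ k ∈ Finset.Icc 1 n, X k ω) ∂P ≤ Real.exp (M ^ 2 * n * t ^ 2 / 2) := by
  obtain ⟨hmono, hle, hB0, hc, hmeas, hint, hmds, hmgf⟩ := hCS
  intro n
  induction n with
  | zero =>
    intro t
    simp only [Nat.cast_zero, Finset.Icc_eq_empty (by norm_num : ¬(1:ℕ) ≤ 0),
      Finset.sum_empty, mul_zero, Real.exp_zero]
    refine ⟨integrable_const 1, ?_⟩
    rw [integral_const, probReal_univ, smul_eq_mul, mul_one]
    norm_num
  | succ n ih =>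
    intro t
    have hk1 : 1 ≤ n + 1 := Nat.le_add_left 1 n
    have hS : ∀ ω, ∑ k ∈ Finset.Icc 1 (n + 1), X k ω
        = (∑ k ∈ Finset.Icc 1 n, X k ω) + X (n + 1) ω := fun ω =>
      Finset.sum_Icc_succ_top hk1 _
    set f : Ω → ℝ := fun ω => Real.exp (t * ∑ k ∈ Finset.Icc 1 n, X k ω) with hf_def
    set g : Ω → ℝ := fun ω => Real.exp (t * X (n + 1) ω) with hg_def
    have hSm : StronglyMeasurable[B n] (fun ω => ∑ k ∈ Finset.Icc 1 n, X k ω) :=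
      Finset.stronglyMeasurable_fun_sum _ fun k hk =>
        (hmeas k (Finset.mem_Icc.mp hk).1).mono (hmono (Finset.mem_Icc.mp hk).2)
    have hfm : StronglyMeasurable[B n] f :=
      Real.continuous_exp.comp_stronglyMeasurable (hSm.const_mul t)
    have hgm : StronglyMeasurable[B (n + 1)] g :=
      Real.continuous_exp.comp_stronglyMeasurable ((hmeas (n + 1) hk1).const_mul t)
    have hgint : Integrable g P := (hmgf (n + 1) hk1 t).1
    have hfint : Integrable f P := (ih t).1
    have h2S := (ih (2 * t)).1
    have h2X := (hmgf (n + 1) hk1 (2 * t)).1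
    have hexp2 : ∀ a b : ℝ, Real.exp a * Real.exp b
        ≤ (Real.exp (2 * a) + Real.exp (2 * b)) / 2 := by
      intro a b
      have h1 : Real.exp (2 * a) = Real.exp a * Real.exp a := by
        rw [← Real.exp_add]; ring_nf
      have h2 : Real.exp (2 * b) = Real.exp b * Real.exp b := by
        rw [← Real.exp_add]; ring_nf
      nlinarith [sq_nonneg (Real.exp a - Real.exp b)]
    have hfg : Integrable (f * g) P := by
      refine Integrable.mono' ((h2S.add h2X).div_const 2)
        ((hfm.mono (hle n)).aestronglyMeasurable.mul
          (hgm.mono (hle (n + 1))).aestronglyMeasurable) ?_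
      filter_upwards with ω
      have h0 : (0:ℝ) < f ω * g ω := mul_pos (Real.exp_pos _) (Real.exp_pos _)
      rw [Pi.mul_apply, Real.norm_eq_abs, abs_of_pos h0]
      have := hexp2 (t * ∑ k ∈ Finset.Icc 1 n, X k ω) (t * X (n + 1) ω)
      simpa [hf_def, hg_def, mul_assoc, mul_left_comm, mul_comm] using this
    have hpull : P[f * g | B n] =ᵐ[P] f * P[g | B n] :=
      condExp_mul_of_stronglyMeasurable_left hfm hfg hgint
    have hcond := (hmgf (n + 1) hk1 t).2
    have hcond' : P[g | B n] ≤ᵐ[P] fun _ => Real.exp (c (n + 1) ^ 2 * t ^ 2 / 2) := by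
      simpa using hcond
    have hInt1 : Integrable (f * P[g | B n]) P := (integrable_condExp).congr hpull
    have hstep : Integrable (fun ω => Real.exp (t * ∑ k ∈ Finset.Icc 1 (n + 1), X k ω)) P := by
      refine hfg.congr ?_
      filter_upwards with ω
      rw [hS ω, Pi.mul_apply, hf_def, hg_def, ← Real.exp_add, mul_add]
    refine ⟨hstep, ?_⟩
    calc ∫ ω, Real.exp (t * ∑ k ∈ Finset.Icc 1 (n + 1), X k ω) ∂P
        = ∫ ω, (f * g) ω ∂P := by
          refine integral_congr_ae ?_
          filter_upwards with ω
          rw [hS ω, Pi.mul_apply, hf_def, hg_def, ← Real.exp_add, mul_add]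
      _ = ∫ ω, (P[f * g | B n]) ω ∂P := (integral_condExp (hle n)).symm
      _ = ∫ ω, (f * P[g | B n]) ω ∂P := integral_congr_ae hpull
      _ ≤ ∫ ω, f ω * Real.exp (c (n + 1) ^ 2 * t ^ 2 / 2) ∂P := by
          refine integral_mono_ae hInt1 (hfint.mul_const _) ?_
          filter_upwards [hcond'] with ω hω
          exact mul_le_mul_of_nonneg_left hω (Real.exp_pos _).le
      _ = (∫ ω, f ω ∂P) * Real.exp (c (n + 1) ^ 2 * t ^ 2 / 2) := integral_mul_const _ _
      _ ≤ Real.exp (M ^ 2 * n * t ^ 2 / 2) * Real.exp (M ^ 2 * t ^ 2 / 2) := by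
          refine mul_le_mul (ih t).2 ?_ (Real.exp_pos _).le (Real.exp_pos _).le
          refine Real.exp_le_exp.mpr ?_
          have hcN : c (n + 1) ^ 2 ≤ M ^ 2 :=
            pow_le_pow_left₀ (hc (n + 1) hk1).le (hM (n + 1) hk1) 2
          have : (0:ℝ) ≤ t ^ 2 / 2 := by positivity
          nlinarith
      _ = Real.exp (M ^ 2 * (n + 1 : ℕ) * t ^ 2 / 2) := by
          rw [← Real.exp_add]; congr 1; push_cast; ring

/-- Chernoff two-sided tail bound from an MGF bound. -/
lemma tail_bound_aux {Ω : Type*} [MeasurableSpace Ω] (P : Measure Ω) [IsProbabilityMeasure P]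
    (S : Ω → ℝ) (v : ℝ) (hv : 0 < v)
    (h : ∀ t : ℝ, Integrable (fun ω => Real.exp (t * S ω)) P ∧
      ∫ ω, Real.exp (t * S ω) ∂P ≤ Real.exp (v * t ^ 2 / 2))
    (L : ℝ) (hL : 0 ≤ L) :
    P {ω | L ≤ S ω} ≤ ENNReal.ofReal (Real.exp (-(L ^ 2 / (2 * v)))) ∧
    P {ω | S ω ≤ -L} ≤ ENNReal.ofReal (Real.exp (-(L ^ 2 / (2 * v)))) := by
  have hmgf : ∀ t : ℝ, mgf S P t ≤ Real.exp (v * t ^ 2 / 2) := fun t => (h t).2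
  constructor
  · have ht : (0:ℝ) ≤ L / v := div_nonneg hL hv.le
    have h1 := measure_ge_le_exp_mul_mgf (X := S) (μ := P) (t := L / v) L ht (h _).1
    have h2 : Real.exp (-(L / v) * L) * mgf S P (L / v) ≤ Real.exp (-(L ^ 2 / (2 * v))) := by
      calc Real.exp (-(L / v) * L) * mgf S P (L / v)
          ≤ Real.exp (-(L / v) * L) * Real.exp (v * (L / v) ^ 2 / 2) :=
            mul_le_mul_of_nonneg_left (hmgf _) (Real.exp_pos _).le
        _ = Real.exp (-(L ^ 2 / (2 * v))) := by
            rw [← Real.exp_add]; congr 1; field_simp; ring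
    rw [← ENNReal.ofReal_toReal (measure_ne_top P _)]
    exact ENNReal.ofReal_le_ofReal (h1.trans h2)
  · have ht : (-(L / v) : ℝ) ≤ 0 := neg_nonpos.mpr (div_nonneg hL hv.le)
    have h1 := measure_le_le_exp_mul_mgf (X := S) (μ := P) (t := -(L / v)) (-L) ht (h _).1
    have h2 : Real.exp (-(-(L / v)) * -L) * mgf S P (-(L / v))
        ≤ Real.exp (-(L ^ 2 / (2 * v))) := by
      calc Real.exp (-(-(L / v)) * -L) * mgf S P (-(L / v))
          ≤ Real.exp (-(-(L / v)) * -L) * Real.exp (v * (-(L / v)) ^ 2 / 2) :=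
            mul_le_mul_of_nonneg_left (hmgf _) (Real.exp_pos _).le
        _ = Real.exp (-(L ^ 2 / (2 * v))) := by
            rw [← Real.exp_add]; congr 1; field_simp; ring
    rw [← ENNReal.ofReal_toReal (measure_ne_top P _)]
    exact ENNReal.ofReal_le_ofReal (h1.trans h2)
/-- Corollary 4.13 for (𝓑, c²)-conditionally subgaussian sequences with bounded c. -/
theorem stmt19 {Ω : Type*} {mΩ : MeasurableSpace Ω} (P : Measure Ω) [IsProbabilityMeasure P]
    (β : ℝ) (hβ : 0 < β)
    (B : ℕ → MeasurableSpace Ω) (c : ℕ → ℝ) (X : ℕ → Ω → ℝ)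
    (hCS : CondSubgaussianSeq P B c X)
    (hbdd : ∃ M : ℝ, ∀ k, 1 ≤ k → c k ≤ M) :
    ∀ᵐ ω ∂P, Tendsto
      (fun n : ℕ => ((n : ℝ) * Real.log n ^ (1 + β)) ^ (-(1 / 2) : ℝ) *
        ∑ k ∈ Finset.Icc 1 n, X k ω) atTop (𝓝 0) := by

  obtain ⟨M0, hM0⟩ := hbdd
  set M : ℝ := max M0 1 with hM_def
  have hM : ∀ k, 1 ≤ k → c k ≤ M := fun k hk => (hM0 k hk).trans (le_max_left _ _)
  have hMpos : (0:ℝ) < M := lt_of_lt_of_le one_pos (le_max_right _ _)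
  have key := mgf_bound_aux P B c X hCS M hM
  -- Per-ε Borel–Cantelli statement
  have perε : ∀ ε : ℝ, 0 < ε → ∀ᵐ ω ∂P, ∀ᶠ n in atTop,
      |∑ k ∈ Finset.Icc 1 n, X k ω| < ε * Real.sqrt ((n:ℝ) * Real.log n ^ (1 + β)) := by
    intro ε hε
    set K : ℝ := ε ^ 2 / (2 * M ^ 2) with hK_def
    have hK : 0 < K := by positivity
    set E : ℕ → Set Ω := fun n =>
      {ω | ε * Real.sqrt ((n:ℝ) * Real.log n ^ (1 + β)) ≤ |∑ k ∈ Finset.Icc 1 n, X k ω|}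
      with hE_def
    set b : ℕ → ℝ := fun n => 2 * Real.exp (-(K * Real.log n ^ (1 + β))) with hb_def
    have hbnonneg : ∀ n, 0 ≤ b n := fun n => by positivity
    have hEb : ∀ n, P (E n) ≤ ENNReal.ofReal (b n) := by
      intro n
      rcases lt_or_ge n 2 with h2 | h2
      · have hlog : Real.log n = 0 := by
          interval_cases n <;> simp
        have hb2 : b n = 2 := by
          simp [hb_def, hlog, Real.zero_rpow (by linarith : (1 + β) ≠ 0)]
        calc P (E n) ≤ 1 := prob_le_one
          _ ≤ ENNReal.ofReal (b n) := by
              rw [hb2]; exact ENNReal.one_le_ofReal.mpr one_le_two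
      · have hn1 : (1:ℝ) < n := by exact_mod_cast h2
        have hn0 : (0:ℝ) < n := by linarith
        have hlogpos : 0 < Real.log n := Real.log_pos hn1
        have hgpos : 0 < (n:ℝ) * Real.log n ^ (1 + β) :=
          mul_pos hn0 (Real.rpow_pos_of_pos hlogpos _)
        set L : ℝ := ε * Real.sqrt ((n:ℝ) * Real.log n ^ (1 + β)) with hL_def
        have hL : 0 ≤ L := by positivity
        have hv : 0 < M ^ 2 * (n:ℝ) := by positivity
        have htb := tail_bound_aux P (fun ω => ∑ k ∈ Finset.Icc 1 n, X k ω)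
          (M ^ 2 * n) hv (key n) L hL
        have harg : L ^ 2 / (2 * (M ^ 2 * n)) = K * Real.log n ^ (1 + β) := by
          rw [hL_def, mul_pow, Real.sq_sqrt hgpos.le, hK_def]
          field_simp
        have hsub : E n ⊆ {ω | L ≤ ∑ k ∈ Finset.Icc 1 n, X k ω}
            ∪ {ω | (∑ k ∈ Finset.Icc 1 n, X k ω) ≤ -L} := by
          intro ω hω
          have hω' : L ≤ |∑ k ∈ Finset.Icc 1 n, X k ω| := hω
          rcases le_abs.mp hω' with h | h
          · exact Or.inl h
          · exact Or.inr (show (∑ k ∈ Finset.Icc 1 n, X k ω) ≤ -L by linarith)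
        calc P (E n) ≤ P ({ω | L ≤ ∑ k ∈ Finset.Icc 1 n, X k ω}
              ∪ {ω | (∑ k ∈ Finset.Icc 1 n, X k ω) ≤ -L}) := measure_mono hsub
          _ ≤ P {ω | L ≤ ∑ k ∈ Finset.Icc 1 n, X k ω}
              + P {ω | (∑ k ∈ Finset.Icc 1 n, X k ω) ≤ -L} := measure_union_le _ _
          _ ≤ ENNReal.ofReal (Real.exp (-(L ^ 2 / (2 * (M ^ 2 * n)))))
              + ENNReal.ofReal (Real.exp (-(L ^ 2 / (2 * (M ^ 2 * n))))) :=
              add_le_add htb.1 htb.2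
          _ = ENNReal.ofReal (2 * Real.exp (-(L ^ 2 / (2 * (M ^ 2 * n))))) := by
              rw [← ENNReal.ofReal_add (Real.exp_pos _).le (Real.exp_pos _).le]
              congr 1; ring
          _ = ENNReal.ofReal (b n) := by rw [harg]
    have hsum : Summable b := by
      have h1 : Tendsto (fun n : ℕ => Real.log n) atTop atTop :=
        Real.tendsto_log_atTop.comp tendsto_natCast_atTop_atTop
      have h2 : Tendsto (fun n : ℕ => K * Real.log n ^ β) atTop atTop :=
        ((tendsto_rpow_atTop hβ).comp h1).const_mul_atTop hK
      refine summable_of_isBigO_nat (g := fun n => ((n:ℝ) ^ 2)⁻¹)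
        ?_ (Asymptotics.IsBigO.of_bound 2 ?_)
      · simpa using (summable_one_div_nat_pow (p := 2)).mpr le_rfl
      · filter_upwards [h2.eventually_ge_atTop 2, eventually_ge_atTop 2] with n h2K h2n
        have hn1 : (1:ℝ) < n := by exact_mod_cast h2n
        have hn0 : (0:ℝ) < n := by linarith
        have hlogpos : 0 < Real.log n := Real.log_pos hn1
        have hsplit : Real.log n ^ (1 + β) = Real.log n * Real.log n ^ β := by
          rw [Real.rpow_add hlogpos, Real.rpow_one]
        have hineq : 2 * Real.log n ≤ K * Real.log n ^ (1 + β) := by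
          rw [hsplit]
          calc 2 * Real.log n ≤ (K * Real.log n ^ β) * Real.log n :=
                mul_le_mul_of_nonneg_right h2K hlogpos.le
            _ = K * (Real.log n * Real.log n ^ β) := by ring
        have hexp : Real.exp (-(K * Real.log n ^ (1 + β)))
            ≤ Real.exp (-(2 * Real.log n)) := Real.exp_le_exp.mpr (by linarith)
        have hid : Real.exp (-(2 * Real.log n)) = ((n:ℝ) ^ 2)⁻¹ := by
          rw [show -(2 * Real.log n) = Real.log (n:ℝ) * (-2 : ℝ) by ring,
            ← Real.rpow_def_of_pos hn0, show (-2:ℝ) = -((2:ℕ):ℝ) by norm_num,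
            Real.rpow_neg hn0.le, Real.rpow_natCast]
        rw [Real.norm_eq_abs, abs_of_nonneg (hbnonneg n), Real.norm_eq_abs,
          abs_of_nonneg (by positivity : (0:ℝ) ≤ ((n:ℝ) ^ 2)⁻¹)]
        calc b n = 2 * Real.exp (-(K * Real.log n ^ (1 + β))) := rfl
          _ ≤ 2 * Real.exp (-(2 * Real.log n)) := by linarith
          _ = 2 * ((n:ℝ) ^ 2)⁻¹ := by rw [hid]
    have htsum : (∑' n, P (E n)) ≠ ⊤ := by
      refine ((ENNReal.tsum_le_tsum hEb).trans_lt ?_).ne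
      rw [← ENNReal.ofReal_tsum_of_nonneg hbnonneg hsum]
      exact ENNReal.ofReal_lt_top
    filter_upwards [ae_eventually_notMem htsum] with ω hω
    exact hω.mono fun n hn => not_le.mp hn
  -- Assemble over ε = 1/(m+1)
  have main : ∀ᵐ ω ∂P, ∀ m : ℕ, ∀ᶠ n in atTop,
      |∑ k ∈ Finset.Icc 1 n, X k ω| < (1 / ((m:ℝ) + 1)) * Real.sqrt ((n:ℝ) * Real.log n ^ (1 + β)) :=
    ae_all_iff.mpr fun m => perε (1 / ((m:ℝ) + 1)) (by positivity)
  filter_upwards [main] with ω hω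
  rw [Metric.tendsto_atTop]
  intro ε hε
  obtain ⟨m, hm⟩ := exists_nat_one_div_lt hε
  obtain ⟨N, hN⟩ := eventually_atTop.mp ((hω m).and (eventually_ge_atTop 2))
  refine ⟨N, fun n hn => ?_⟩
  obtain ⟨h1, h2⟩ := hN n hn
  have hn1 : (1:ℝ) < n := by exact_mod_cast h2
  have hn0 : (0:ℝ) < n := by linarith
  have hgpos : 0 < (n:ℝ) * Real.log n ^ (1 + β) :=
    mul_pos hn0 (Real.rpow_pos_of_pos (Real.log_pos hn1) _)
  have hrpos : 0 < ((n:ℝ) * Real.log n ^ (1 + β)) ^ (-(1 / 2) : ℝ) :=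
    Real.rpow_pos_of_pos hgpos _
  have hrw : ((n:ℝ) * Real.log n ^ (1 + β)) ^ (-(1 / 2) : ℝ)
      * Real.sqrt ((n:ℝ) * Real.log n ^ (1 + β)) = 1 := by
    rw [Real.sqrt_eq_rpow, ← Real.rpow_add hgpos]
    norm_num
  rw [Real.dist_eq, sub_zero, abs_mul, abs_of_pos hrpos]
  calc ((n:ℝ) * Real.log n ^ (1 + β)) ^ (-(1 / 2) : ℝ) * |∑ k ∈ Finset.Icc 1 n, X k ω|
      < ((n:ℝ) * Real.log n ^ (1 + β)) ^ (-(1 / 2) : ℝ)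
        * ((1 / ((m:ℝ) + 1)) * Real.sqrt ((n:ℝ) * Real.log n ^ (1 + β))) :=
        mul_lt_mul_of_pos_left h1 hrpos
    _ = (1 / ((m:ℝ) + 1)) * (((n:ℝ) * Real.log n ^ (1 + β)) ^ (-(1 / 2) : ℝ)
        * Real.sqrt ((n:ℝ) * Real.log n ^ (1 + β))) := by ring
    _ = 1 / ((m:ℝ) + 1) := by rw [hrw, mul_one]
    _ < ε := hm
end
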